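/- Proposition 1: For every d×d complex density matrix ρ (d ≥ 2), the quantities S_R and S_I satisfy S_I² ≤ 1 + S_R²; equivalently, Tr(I²) ≤ Tr(R²). -/

import Mathlib

open Matrix
open scoped ComplexOrder

noncomputable section

/-- A density matrix: positive semidefinite with unit trace. -/
def IsDensityMatrix {d : ℕ} (ρ : Matrix (Fin d) (Fin d) ℂ) : Prop :=
  ρ.PosSemidef ∧ ρ.trace = 1

/-- The real part `R = (d/2)(ρ + ρᵀ)`. -/
def Rpart (d : ℕ) (ρ : Matrix (Fin d) (Fin d) ℂ) : Matrix (Fin d) (Fin d) ℂ :=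
  ((d : ℂ) / 2) • (ρ + ρ.transpose)

/-- The imaginary part `I = (d/2)(ρ − ρᵀ)`. -/
def Ipart (d : ℕ) (ρ : Matrix (Fin d) (Fin d) ℂ) : Matrix (Fin d) (Fin d) ℂ :=
  ((d : ℂ) / 2) • (ρ - ρ.transpose)

/-- `S_R = √(Tr(R²)/d − 1)`. -/
def SR (d : ℕ) (ρ : Matrix (Fin d) (Fin d) ℂ) : ℝ :=
  Real.sqrt ((Rpart d ρ * Rpart d ρ).trace.re / d - 1)

/-- `S_I = √(Tr(I²)/d)`. -/
def SI (d : ℕ) (ρ : Matrix (Fin d) (Fin d) ℂ) : ℝ :=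
  Real.sqrt ((Ipart d ρ * Ipart d ρ).trace.re / d)

/-- trace of a PSD complex matrix has nonnegative real part -/
lemma psd_trace_re_nonneg {n : ℕ} {M : Matrix (Fin n) (Fin n) ℂ}
    (hM : M.PosSemidef) : 0 ≤ M.trace.re := by
  have h : ∀ i, 0 ≤ (M i i).re := by
    intro i
    have := hM.re_dotProduct_nonneg (Pi.single i 1)
    simpa [dotProduct, mulVec, Pi.single_apply, Finset.sum_ite_eq,
      Finset.sum_ite_eq'] using this
  rw [Matrix.trace, Complex.re_sum]
  exact Finset.sum_nonneg fun i _ => h i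

lemma herm_trace_sq {n : ℕ} {A : Matrix (Fin n) (Fin n) ℂ}
    (hA : A.IsHermitian) :
    (A * A).trace.re = ∑ i, ∑ j, Complex.normSq (A i j) := by
  rw [Matrix.trace, Complex.re_sum]
  congr 1; ext i
  rw [Matrix.diag_apply, Matrix.mul_apply, Complex.re_sum]
  congr 1; ext j
  have : A j i = (starRingEnd ℂ) (A i j) := by
    have := hA.apply j i
    simpa using this.symm
  rw [this, Complex.mul_conj]
  simp

/-- **Proposition 1.** For every `d×d` density matrix (`d ≥ 2`),
`S_I² ≤ 1 + S_R²`; equivalently `Tr(I²) ≤ Tr(R²)`. -/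
theorem quadratic_bound (d : ℕ) (hd : 2 ≤ d) (ρ : Matrix (Fin d) (Fin d) ℂ)
    (hρ : IsDensityMatrix ρ) :
    SI d ρ ^ 2 ≤ 1 + SR d ρ ^ 2 ∧
    (Ipart d ρ * Ipart d ρ).trace.re ≤ (Rpart d ρ * Rpart d ρ).trace.re := by
  obtain ⟨hpsd, htr⟩ := hρ
  have hH : ρ.IsHermitian := hpsd.1
  have hd0 : (0:ℝ) < d := by positivity
  -- trace identity
  have key : (Rpart d ρ * Rpart d ρ).trace - (Ipart d ρ * Ipart d ρ).trace
      = (d:ℂ)^2 * (ρ * ρᵀ).trace := by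
    simp only [Rpart, Ipart, Matrix.smul_mul, Matrix.mul_smul, trace_smul,
      add_mul, mul_add, sub_mul, mul_sub, trace_add, trace_sub, smul_eq_mul]
    rw [trace_mul_comm ρᵀ ρ]
    ring
  -- nonnegativity of Tr(ρ ρᵀ)
  obtain ⟨S, hSpsd, hSS⟩ : ∃ S : Matrix (Fin d) (Fin d) ℂ, S.PosSemidef ∧ S * S = ρ := by
    open MatrixOrder in
    exact ⟨CFC.sqrt ρ, (CFC.sqrt_nonneg ρ).posSemidef, CFC.sqrt_mul_sqrt_self ρ hpsd.nonneg⟩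
  have hM : (S * ρᵀ * S).PosSemidef := by
    have := hpsd.transpose.mul_mul_conjTranspose_same S
    rwa [hSpsd.isHermitian.eq] at this
  have hT : 0 ≤ (ρ * ρᵀ).trace.re := by
    have h1 : (ρ * ρᵀ).trace = (S * ρᵀ * S).trace := by
      rw [show ρ * ρᵀ = S * (S * ρᵀ) from by
        rw [← Matrix.mul_assoc, hSS], trace_mul_comm]
    rw [h1]
    exact psd_trace_re_nonneg hM
  have part2 : (Ipart d ρ * Ipart d ρ).trace.re ≤ (Rpart d ρ * Rpart d ρ).trace.re := by
    have hre : (Rpart d ρ * Rpart d ρ).trace.re - (Ipart d ρ * Ipart d ρ).trace.re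
        = (d:ℝ)^2 * (ρ * ρᵀ).trace.re := by
      rw [← Complex.sub_re, key, show ((d:ℂ)^2) = (((d:ℝ)^2 : ℝ) : ℂ) by push_cast; ring,
        Complex.re_ofReal_mul]
    nlinarith [sq_nonneg (d:ℝ)]
  refine ⟨?_, part2⟩
  -- Hermitian parts
  have hRH : (Rpart d ρ).IsHermitian := by
    show _ᴴ = _
    simp [Rpart, Matrix.conjTranspose_smul, Matrix.conjTranspose_add,
      hH.transpose.eq, hH.eq]
  have hIH : (Ipart d ρ).IsHermitian := by
    show _ᴴ = _
    simp [Ipart, Matrix.conjTranspose_smul, Matrix.conjTranspose_sub,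
      hH.transpose.eq, hH.eq]
  have hI2 : 0 ≤ (Ipart d ρ * Ipart d ρ).trace.re := by
    rw [herm_trace_sq hIH]
    exact Finset.sum_nonneg fun i _ => Finset.sum_nonneg fun j _ => Complex.normSq_nonneg _
  -- trace of R
  have hRtr : (Rpart d ρ).trace = (d : ℂ) := by
    simp [Rpart, trace_smul, trace_add, trace_transpose, htr, smul_eq_mul]
  have hdiagsum : ∑ i, ((Rpart d ρ) i i).re = (d : ℝ) := by
    have := congrArg Complex.re hRtr
    rwa [Matrix.trace, Complex.re_sum, Complex.natCast_re] at this
  have hsum : (d:ℝ) ≤ ∑ i, ((Rpart d ρ) i i).re ^ 2 := by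
    have h1 := sq_sum_le_card_mul_sum_sq (s := Finset.univ)
      (f := fun i => ((Rpart d ρ) i i).re)
    rw [hdiagsum] at h1
    simp only [Finset.card_univ, Fintype.card_fin] at h1
    nlinarith
  have hR2 : (d:ℝ) ≤ (Rpart d ρ * Rpart d ρ).trace.re := by
    rw [herm_trace_sq hRH]
    refine le_trans hsum (Finset.sum_le_sum fun i _ => ?_)
    calc ((Rpart d ρ) i i).re ^ 2 ≤ Complex.normSq ((Rpart d ρ) i i) := by
          rw [Complex.normSq_apply]; nlinarith [sq_nonneg ((Rpart d ρ) i i).im]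
      _ ≤ ∑ j, Complex.normSq ((Rpart d ρ) i j) :=
          Finset.single_le_sum (fun j _ => Complex.normSq_nonneg _) (Finset.mem_univ i)
  -- conclude
  have hSI : SI d ρ ^ 2 = (Ipart d ρ * Ipart d ρ).trace.re / d := by
    rw [SI, Real.sq_sqrt (by positivity)]
  have hSR : SR d ρ ^ 2 = (Rpart d ρ * Rpart d ρ).trace.re / d - 1 := by
    rw [SR, Real.sq_sqrt]
    rw [sub_nonneg, le_div_iff₀ hd0, one_mul]
    exact le_trans (by norm_num) hR2
  rw [hSI, hSR]
  have : (Ipart d ρ * Ipart d ρ).trace.re / d ≤ (Rpart d ρ * Rpart d ρ).trace.re / d := by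
    gcongr
  linarith
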